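/- Let A be a finite-dimensional local symmetric algebra over an algebraically closed field k of characteristic 3 with dim_k A = 9 and Z(A) ≅ Z(B) where B = k⟨X,Y⟩/⟨X³,Y³,XY+YX⟩. Then Z(A) ∩ J(A) is an ideal of A. -/

import Mathlib

open Module FreeAlgebra

noncomputable section

def IsSymmAlg (k : Type) [Field k] (C : Type) [Ring C] [Algebra k C] : Prop :=
  ∃ s : C →ₗ[k] k, (∀ x y : C, s (x * y) = s (y * x)) ∧
    ∀ I : Ideal C, (∀ x ∈ I, s x = 0) → I = ⊥

def radSub (k : Type) [Field k] (C : Type) [Ring C] [Algebra k C] : Submodule k C :=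
  Submodule.span k {a : C | ¬ IsUnit a}

def socSub (k : Type) [Field k] (C : Type) [Ring C] [Algebra k C] : Submodule k C where
  carrier := {a : C | ∀ b : C, ¬ IsUnit b → b * a = 0 ∧ a * b = 0}
  add_mem' := by
    intro a b ha hb c hc
    obtain ⟨h1, h2⟩ := ha c hc
    obtain ⟨h3, h4⟩ := hb c hc
    constructor
    · rw [mul_add, h1, h3, add_zero]
    · rw [add_mul, h2, h4, add_zero]
  zero_mem' := by
    intro b hb
    constructor <;> simp
  smul_mem' := by
    intro r a ha c hc
    obtain ⟨h1, h2⟩ := ha c hc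
    constructor
    · rw [Algebra.mul_smul_comm, h1, smul_zero]
    · rw [Algebra.smul_mul_assoc, h2, smul_zero]

/-- The relations X³ = 0, Y³ = 0, XY + YX = 0 in the free algebra on two
generators. -/
def Brel (k : Type) [Field k] :
    FreeAlgebra k (Fin 2) → FreeAlgebra k (Fin 2) → Prop := fun a b =>
  b = 0 ∧ (a = ι k (0 : Fin 2) ^ 3 ∨ a = ι k (1 : Fin 2) ^ 3 ∨
    a = ι k (0 : Fin 2) * ι k (1 : Fin 2) + ι k (1 : Fin 2) * ι k (0 : Fin 2))

/-- The quantum complete intersection B = k⟨X,Y⟩/⟨X³, Y³, XY+YX⟩. -/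
abbrev Balg (k : Type) [Field k] := RingQuot (Brel k)

/-- The image of X in B. -/
def xB (k : Type) [Field k] : Balg k := RingQuot.mkAlgHom k (Brel k) (ι k 0)

/-- The image of Y in B. -/
def yB (k : Type) [Field k] : Balg k := RingQuot.mkAlgHom k (Brel k) (ι k 1)

section Bside

variable (k : Type) [Field k]

abbrev V9 (k : Type) [Field k] := ℕ → ℕ → k

def Xop : V9 k →ₗ[k] V9 k where
  toFun f := fun i j => if i = 0 ∨ 3 ≤ i then 0 else f (i-1) j
  map_add' f g := by funext i j; dsimp only [Pi.add_apply]; split <;> simp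
  map_smul' c f := by funext i j; dsimp only [Pi.smul_apply, RingHom.id_apply]; split <;> simp

def Yop : V9 k →ₗ[k] V9 k where
  toFun f := fun i j => if j = 0 ∨ 3 ≤ j then 0 else (-1:k)^i * f i (j-1)
  map_add' f g := by funext i j; dsimp only [Pi.add_apply]; split <;> [simp; ring]
  map_smul' c f := by funext i j; dsimp only [Pi.smul_apply, RingHom.id_apply, smul_eq_mul]; split <;> [simp; ring]

@[simp] lemma Xop_apply (f : V9 k) (i j : ℕ) :
    Xop k f i j = if i = 0 ∨ 3 ≤ i then 0 else f (i-1) j := rfl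

@[simp] lemma Yop_apply (f : V9 k) (i j : ℕ) :
    Yop k f i j = if j = 0 ∨ 3 ≤ j then 0 else (-1:k)^i * f i (j-1) := rfl

lemma Xop_cube : (Xop k * Xop k * Xop k : Module.End k (V9 k)) = 0 := by
  ext f i j
  simp only [Module.End.mul_apply, Xop_apply, LinearMap.zero_apply, Pi.zero_apply]
  rcases i with _|_|_|i <;> norm_num

lemma Yop_cube : (Yop k * Yop k * Yop k : Module.End k (V9 k)) = 0 := by
  ext f i j
  simp only [Module.End.mul_apply, Yop_apply, LinearMap.zero_apply, Pi.zero_apply]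
  rcases j with _|_|_|j <;> norm_num

lemma XYop_anti : (Xop k * Yop k + Yop k * Xop k : Module.End k (V9 k)) = 0 := by
  ext f i j
  simp only [Module.End.mul_apply, LinearMap.add_apply, Pi.add_apply, Xop_apply, Yop_apply,
    LinearMap.zero_apply, Pi.zero_apply]
  by_cases hi : i = 0 ∨ 3 ≤ i
  · simp [hi]
  · by_cases hj : j = 0 ∨ 3 ≤ j
    · simp [hj]
    · simp only [hi, hj, if_false]
      rcases i with _|n
      · exact absurd (Or.inl rfl) hi
      · simp only [Nat.add_sub_cancel, pow_succ]
        ring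

def phiB : Balg k →ₐ[k] Module.End k (V9 k) :=
  RingQuot.liftAlgHom k ⟨FreeAlgebra.lift k ![Xop k, Yop k], by
    rintro x y ⟨rfl, h | h | h⟩ <;> subst h <;>
      simp only [map_zero, map_pow, map_add, map_mul, FreeAlgebra.lift_ι_apply,
        Matrix.cons_val_zero, Matrix.cons_val_one, Matrix.head_cons]
    · rw [pow_succ, pow_two]
      exact Xop_cube k
    · rw [pow_succ, pow_two]
      exact Yop_cube k
    · exact XYop_anti k⟩

@[simp] lemma phiB_x : phiB k (xB k) = Xop k := by
  simp [phiB, xB, RingQuot.liftAlgHom_mkAlgHom_apply]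

@[simp] lemma phiB_y : phiB k (yB k) = Yop k := by
  simp [phiB, yB, RingQuot.liftAlgHom_mkAlgHom_apply]

def deltaV : V9 k := fun i j => if i = 0 ∧ j = 0 then 1 else 0

@[simp] lemma deltaV_apply (i j : ℕ) : deltaV k i j = if i = 0 ∧ j = 0 then 1 else 0 := rfl

/-- evaluation functional -/
def psiB (p q : ℕ) : Balg k →ₗ[k] k where
  toFun b := phiB k b (deltaV k) p q
  map_add' b c := by simp
  map_smul' c b := by simp

@[simp] lemma psiB_apply (p q : ℕ) (b : Balg k) : psiB k p q b = phiB k b (deltaV k) p q := rfl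

-- relations in B
lemma hx3 : xB k * xB k * xB k = 0 := by
  have := RingQuot.mkAlgHom_rel k (s := Brel k) ⟨rfl, Or.inl rfl⟩
  simpa [map_pow, map_zero, pow_succ, pow_two, xB, mul_assoc] using this

lemma hy3 : yB k * yB k * yB k = 0 := by
  have := RingQuot.mkAlgHom_rel k (s := Brel k) ⟨rfl, Or.inr (Or.inl rfl)⟩
  simpa [map_pow, map_zero, pow_succ, pow_two, yB, mul_assoc] using this

lemma hyx : yB k * xB k = -(xB k * yB k) := by
  have := RingQuot.mkAlgHom_rel k (s := Brel k) ⟨rfl, Or.inr (Or.inr rfl)⟩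
  simp only [map_add, map_mul, map_zero, xB, yB] at this ⊢
  exact eq_neg_of_add_eq_zero_right this

section RingFacts
variable {R : Type} [Ring R] (x y : R)

lemma rf_yxx (h : y*x = -(x*y)) : y*(x*x) = (x*x)*y := by
  rw [← mul_assoc, h, neg_mul, mul_assoc, h, mul_neg, neg_neg, ← mul_assoc]

lemma rf_xyy (h : y*x = -(x*y)) : (y*y)*x = x*(y*y) := by
  rw [mul_assoc, h, mul_neg, ← mul_assoc, h, neg_mul, neg_neg, mul_assoc]

lemma rf4a (h : y*x = -(x*y)) (h3x : x*x*x = 0) : x*((x*x)*y) = ((x*x)*y)*x := by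
  have h1 : x*((x*x)*y) = 0 := by rw [← mul_assoc, ← mul_assoc, h3x, zero_mul]
  have h2 : ((x*x)*y)*x = 0 := by
    rw [mul_assoc, h, mul_neg, ← mul_assoc, h3x, zero_mul, neg_zero]
  rw [h1, h2]

lemma rf4b (h : y*x = -(x*y)) : y*((x*x)*y) = ((x*x)*y)*y := by
  rw [← mul_assoc, rf_yxx x y h, mul_assoc, mul_assoc]

lemma rf5a (h : y*x = -(x*y)) : x*(x*(y*y)) = (x*(y*y))*x := by
  rw [mul_assoc, rf_xyy x y h]

lemma rf5b (h : y*x = -(x*y)) (h3y : y*y*y = 0) : y*(x*(y*y)) = (x*(y*y))*y := by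
  have h1 : y*(x*(y*y)) = 0 := by
    rw [← mul_assoc, h, neg_mul, mul_assoc, ← mul_assoc y y y, h3y, mul_zero, neg_zero]
  have h2 : (x*(y*y))*y = 0 := by
    rw [mul_assoc, h3y, mul_zero]
  rw [h1, h2]

lemma rf6a (h : y*x = -(x*y)) (h3x : x*x*x = 0) : x*((x*x)*(y*y)) = ((x*x)*(y*y))*x := by
  have h1 : x*((x*x)*(y*y)) = 0 := by
    rw [← mul_assoc, ← mul_assoc x x x, h3x, zero_mul]
  have h2 : ((x*x)*(y*y))*x = 0 := by
    rw [mul_assoc, rf_xyy x y h, ← mul_assoc, h3x, zero_mul]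
  rw [h1, h2]

lemma rf6b (h : y*x = -(x*y)) (h3y : y*y*y = 0) : y*((x*x)*(y*y)) = ((x*x)*(y*y))*y := by
  have h1 : y*((x*x)*(y*y)) = 0 := by
    rw [← mul_assoc, rf_yxx x y h, mul_assoc, ← mul_assoc y y y, h3y, mul_zero]
  have h2 : ((x*x)*(y*y))*y = 0 := by
    rw [mul_assoc, h3y, mul_zero]
  rw [h1, h2]

end RingFacts

lemma central_of_comm (z : Balg k) (hx : xB k * z = z * xB k) (hy : yB k * z = z * yB k) :
    z ∈ Subalgebra.center k (Balg k) := by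
  rw [Subalgebra.mem_center_iff]
  intro b
  obtain ⟨f, rfl⟩ := RingQuot.mkAlgHom_surjective k (Brel k) b
  induction f using FreeAlgebra.induction with
  | grade0 r => rw [AlgHom.commutes]; exact Algebra.commutes r z
  | grade1 m =>
      fin_cases m
      · exact hx
      · exact hy
  | mul a b iha ihb => rw [map_mul, mul_assoc, ihb, ← mul_assoc, iha, mul_assoc]
  | add a b iha ihb => rw [map_add, add_mul, mul_add, iha, ihb]

def zc : Fin 6 → Balg k :=
  ![1, xB k * xB k, yB k * yB k, (xB k * xB k) * yB k, xB k * (yB k * yB k),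
    (xB k * xB k) * (yB k * yB k)]

lemma zc_mem : ∀ i, zc k i ∈ Subalgebra.center k (Balg k) := by
  have e0 : zc k 0 = 1 := rfl
  have e1 : zc k 1 = xB k * xB k := rfl
  have e2 : zc k 2 = yB k * yB k := rfl
  have e3 : zc k 3 = (xB k * xB k) * yB k := rfl
  have e4 : zc k 4 = xB k * (yB k * yB k) := rfl
  have e5 : zc k 5 = (xB k * xB k) * (yB k * yB k) := rfl
  intro i
  fin_cases i
  · exact Subalgebra.one_mem _
  · exact central_of_comm k _ (mul_assoc _ _ _).symm (rf_yxx _ _ (hyx k))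
  · exact central_of_comm k _ (rf_xyy _ _ (hyx k)).symm (mul_assoc _ _ _).symm
  · exact central_of_comm k _ (rf4a _ _ (hyx k) (hx3 k)) (rf4b _ _ (hyx k))
  · exact central_of_comm k _ (rf5a _ _ (hyx k)) (rf5b _ _ (hyx k) (hy3 k))
  · exact central_of_comm k _ (rf6a _ _ (hyx k) (hx3 k)) (rf6b _ _ (hyx k) (hy3 k))

lemma zc_indep : LinearIndependent k (zc k) := by
  rw [Fintype.linearIndependent_iff]
  intro lam h
  have key : ∀ p q : ℕ, (∑ i, lam i * psiB k p q (zc k i)) = 0 := by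
    intro p q
    have h2 := congrArg (psiB k p q) h
    rw [map_sum, map_zero] at h2
    simpa [smul_eq_mul] using h2
  have e0 : zc k 0 = 1 := rfl
  have e1 : zc k 1 = xB k * xB k := rfl
  have e2 : zc k 2 = yB k * yB k := rfl
  have e3 : zc k 3 = (xB k * xB k) * yB k := rfl
  have e4 : zc k 4 = xB k * (yB k * yB k) := rfl
  have e5 : zc k 5 = (xB k * xB k) * (yB k * yB k) := rfl
  intro i
  fin_cases i
  · have := key 0 0
    norm_num [Fin.sum_univ_six, e0, e1, e2, e3, e4, e5, map_mul, map_one, Module.End.mul_apply,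
      Module.End.one_apply] at this
    exact this
  · have := key 2 0
    norm_num [Fin.sum_univ_six, e0, e1, e2, e3, e4, e5, map_mul, map_one, Module.End.mul_apply,
      Module.End.one_apply] at this
    exact this
  · have := key 0 2
    norm_num [Fin.sum_univ_six, e0, e1, e2, e3, e4, e5, map_mul, map_one, Module.End.mul_apply,
      Module.End.one_apply] at this
    exact this
  · have := key 2 1
    norm_num [Fin.sum_univ_six, e0, e1, e2, e3, e4, e5, map_mul, map_one, Module.End.mul_apply,
      Module.End.one_apply] at this
    exact this
  · have := key 1 2
    norm_num [Fin.sum_univ_six, e0, e1, e2, e3, e4, e5, map_mul, map_one, Module.End.mul_apply,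
      Module.End.one_apply] at this
    exact this
  · have := key 2 2
    norm_num [Fin.sum_univ_six, e0, e1, e2, e3, e4, e5, map_mul, map_one, Module.End.mul_apply,
      Module.End.one_apply] at this
    exact this

lemma exists_indep_center :
    ∃ g : Fin 6 → ↥(Subalgebra.center k (Balg k)), LinearIndependent k g := by
  refine ⟨fun i => ⟨zc k i, zc_mem k i⟩, ?_⟩
  apply LinearIndependent.of_comp (Subalgebra.center k (Balg k)).val.toLinearMap
  exact zc_indep k

end Bside


lemma nonunits_add' {R : Type} [Ring R] [IsLocalRing R] {a b : R}
    (ha : ¬ IsUnit a) (hb : ¬ IsUnit b) : ¬ IsUnit (a + b) := by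
  intro h
  obtain ⟨u, hu⟩ := h
  have h1 : (↑u⁻¹ : R) * a + (↑u⁻¹ : R) * b = 1 := by
    rw [← mul_add, ← hu, u.inv_mul]
  rcases IsLocalRing.isUnit_or_isUnit_of_add_one h1 with h2 | h2
  · apply ha
    have : a = ↑u * ((↑u⁻¹ : R) * a) := by rw [← mul_assoc, u.mul_inv, one_mul]
    rw [this]
    exact u.isUnit.mul h2
  · apply hb
    have : b = ↑u * ((↑u⁻¹ : R) * b) := by rw [← mul_assoc, u.mul_inv, one_mul]
    rw [this]
    exact u.isUnit.mul h2

theorem central_mul_central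
    (k A : Type) [Field k] [Ring A] [Algebra k A] [FiniteDimensional k A]
    [IsLocalRing A]
    (hsym : IsSymmAlg k A) (hdim : finrank k A = 9)
    (hZ : ∃ g : Fin 6 → ↥(Subalgebra.center k A), LinearIndependent k g)
    (z : A) (hz : z ∈ Subalgebra.center k A) (hzu : ¬ IsUnit z) (a : A) :
    a * z ∈ Subalgebra.center k A := by
  classical
  obtain ⟨s, hs, hnd⟩ := hsym
  -- nondegeneracy
  have N : ∀ t : A, (∀ b, s (t * b) = 0) → t = 0 := by
    intro t ht
    let I : Ideal A :=
      { carrier := {x | ∀ b, s (x * b) = 0}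
        add_mem' := fun {u v} hu hv b => by
          rw [add_mul, map_add, hu b, hv b, add_zero]
        zero_mem' := fun b => by rw [zero_mul, map_zero]
        smul_mem' := fun c x hx => by
          intro b
          have h1 : s ((c * x) * b) = s (x * (b * c)) := by
            rw [mul_assoc, hs, mul_assoc]
          rw [smul_eq_mul, h1, hx] }
    have hI : I = ⊥ := by
      apply hnd
      intro x hx
      have := hx 1
      rwa [mul_one] at this
    have ht' : t ∈ I := ht
    rw [hI] at ht'
    exact (Submodule.mem_bot A).mp ht'
  have cyc : ∀ x p q : A, s (x * (p * q - q * p)) = s ((x * p - p * x) * q) := by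
    intro x p q
    rw [mul_sub, sub_mul, map_sub, map_sub]
    congr 1
    · rw [← mul_assoc]
    · rw [← mul_assoc, hs, ← mul_assoc]
  set Zs := Subalgebra.toSubmodule (Subalgebra.center k A) with hZsdef
  set K : Submodule k A := Submodule.span k {x : A | ∃ p q : A, p * q - q * p = x} with hK
  let G : A →ₗ[k] (↥K →ₗ[k] k) :=
    { toFun := fun x => s ∘ₗ (LinearMap.mulLeft k x) ∘ₗ K.subtype
      map_add' := fun u v => by
        ext κ
        simp [LinearMap.mulLeft_apply, add_mul]
      map_smul' := fun c u => by
        ext κ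
        simp [LinearMap.mulLeft_apply, smul_mul_assoc] }
  have hGapply : ∀ (x : A) (κ : ↥K), G x κ = s (x * ↑κ) := fun x κ => rfl
  have hker : LinearMap.ker G = Zs := by
    ext x
    simp only [LinearMap.mem_ker, hZsdef, Subalgebra.mem_toSubmodule]
    constructor
    · intro hx
      rw [Subalgebra.mem_center_iff]
      intro p
      have h0 : ∀ q, s ((x * p - p * x) * q) = 0 := by
        intro q
        rw [← cyc]
        have hmem : (p * q - q * p) ∈ K := Submodule.subset_span ⟨p, q, rfl⟩
        have h1 : G x ⟨_, hmem⟩ = 0 := by rw [hx]; rfl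
        rw [hGapply] at h1
        exact h1
      exact (sub_eq_zero.mp (N _ h0)).symm
    · intro hx
      apply LinearMap.ext
      intro κ
      rw [hGapply, LinearMap.zero_apply]
      have hle : K ≤ LinearMap.ker (s ∘ₗ LinearMap.mulLeft k x) := by
        rw [hK]
        apply Submodule.span_le.mpr
        rintro v ⟨p, q, rfl⟩
        simp only [SetLike.mem_coe, LinearMap.mem_ker, LinearMap.comp_apply,
          LinearMap.mulLeft_apply]
        rw [cyc, sub_eq_zero.mpr (Subalgebra.mem_center_iff.mp hx p).symm, zero_mul, map_zero]
      exact hle κ.2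
  obtain ⟨g, hg⟩ := hZ
  have hm6 : 6 ≤ finrank k ↥Zs := by
    have hcard := hg.fintype_card_le_finrank
    rw [hZsdef, Subalgebra.finrank_toSubmodule]
    simpa using hcard
  have hq9 : finrank k (A ⧸ Zs) + finrank k ↥Zs = 9 := by
    rw [← hdim]
    exact Submodule.finrank_quotient_add_finrank Zs
  have hr3 : finrank k (A ⧸ Zs) ≤ 3 := by omega
  have hrK : finrank k (A ⧸ Zs) ≤ finrank k ↥K := by
    have e1 : finrank k (A ⧸ Zs) = finrank k ↥(LinearMap.range G) := by
      rw [← hker]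
      exact (LinearMap.quotKerEquivRange G).finrank_eq
    have e2 : finrank k ↥(LinearMap.range G) ≤ finrank k (↥K →ₗ[k] k) :=
      Submodule.finrank_le _
    have e3 : finrank k (↥K →ₗ[k] k) = finrank k ↥K := by
      rw [Module.finrank_linearMap, finrank_self, mul_one]
    omega
  have hza : z * a = a * z := (Subalgebra.mem_center_iff.mp hz a).symm
  -- main reduction
  suffices hsuf : ∃ lam : k, a * z - lam • a ∈ Zs by
    obtain ⟨lam, hl⟩ := hsuf
    by_cases h0 : lam = 0
    · subst h0
      rw [zero_smul, sub_zero, hZsdef, Subalgebra.mem_toSubmodule] at hl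
      exact hl
    · have hunit : IsUnit (z - lam • 1) := by
        by_contra hnu
        have hneg : ¬ IsUnit (-(z - lam • (1 : A))) := fun h => hnu (by simpa using h.neg)
        have h1 : ¬ IsUnit (z + -(z - lam • (1 : A))) := nonunits_add' hzu hneg
        have h2 : z + -(z - lam • (1 : A)) = lam • 1 := by
          rw [← sub_eq_add_neg, sub_sub_cancel]
        rw [h2] at h1
        apply h1
        refine ⟨⟨lam • 1, lam⁻¹ • 1, ?_, ?_⟩, rfl⟩
        · rw [smul_mul_smul_comm, one_mul, mul_inv_cancel₀ h0, one_smul]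
        · rw [smul_mul_smul_comm, one_mul, inv_mul_cancel₀ h0, one_smul]
      have hcz : z - lam • 1 ∈ Subalgebra.center k A :=
        Subalgebra.sub_mem _ hz (Subalgebra.smul_mem _ (Subalgebra.one_mem _) lam)
      set u := hunit.unit with hu
      have huv : (↑u : A) = z - lam • 1 := hunit.unit_spec
      have hinv : (↑u⁻¹ : A) ∈ Subalgebra.center k A := by
        rw [Subalgebra.mem_center_iff]
        intro b
        have h3 : (↑u : A) * b = b * ↑u := by
          rw [huv]
          exact (Subalgebra.mem_center_iff.mp hcz b).symm
        calc b * ↑u⁻¹ = ↑u⁻¹ * (↑u * (b * ↑u⁻¹)) := by rw [← mul_assoc, u.inv_mul, one_mul]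
          _ = ↑u⁻¹ * ((↑u * b) * ↑u⁻¹) := by rw [← mul_assoc (↑u : A) b ↑u⁻¹]
          _ = ↑u⁻¹ * ((b * ↑u) * ↑u⁻¹) := by rw [h3]
          _ = ↑u⁻¹ * (b * (↑u * ↑u⁻¹)) := by rw [mul_assoc b]
          _ = ↑u⁻¹ * b := by rw [u.mul_inv, mul_one]
      have hprod : (↑u : A) * a ∈ Subalgebra.center k A := by
        have : (z - lam • 1) * a = a * z - lam • a := by
          rw [sub_mul, smul_mul_assoc, one_mul, hza]
        rw [huv, this]
        rwa [hZsdef, Subalgebra.mem_toSubmodule] at hl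
      have ha : a ∈ Subalgebra.center k A := by
        have : a = ↑u⁻¹ * (↑u * a) := by rw [← mul_assoc, u.inv_mul, one_mul]
        rw [this]
        exact Subalgebra.mul_mem _ hinv hprod
      exact Subalgebra.mul_mem _ ha hz
  by_contra hcon
  push_neg at hcon
  -- hcon : ∀ lam, a * z - lam • a ∉ Zs
  have hπa : Zs.mkQ a ≠ 0 := by
    intro h0
    have haZ : a ∈ Zs := by
      rwa [Submodule.mkQ_apply, Submodule.Quotient.mk_eq_zero] at h0
    apply hcon 0
    rw [zero_smul, sub_zero, hZsdef, Subalgebra.mem_toSubmodule]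
    exact Subalgebra.mul_mem _ (by rwa [hZsdef, Subalgebra.mem_toSubmodule] at haZ) hz
  have hwnot : ∀ lam : k, lam • Zs.mkQ a ≠ Zs.mkQ (a * z) := by
    intro lam hlam
    apply hcon lam
    have h1 : Zs.mkQ (a * z - lam • a) = 0 := by
      rw [map_sub, map_smul, ← hlam, sub_self]
    rwa [Submodule.mkQ_apply, Submodule.Quotient.mk_eq_zero] at h1
  have hpair : LinearIndependent k ![Zs.mkQ (a * z), Zs.mkQ a] := by
    rw [linearIndependent_fin2]
    constructor
    · simpa using hπa
    · intro lam
      simpa using hwnot lam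
  have hr2 : 2 ≤ finrank k (A ⧸ Zs) := by
    simpa using hpair.fintype_card_le_finrank
  -- the commutator span bound, for a suitable third element c
  have claim : ∀ c : A, Zs ⊔ Submodule.span k ({c, a * z, a} : Set A) = ⊤ →
      K ≤ Submodule.span k ({a * c - c * a, (a * z) * c - c * (a * z)} : Set A) := by
    intro c hsupc
    set U := Submodule.span k ({a * c - c * a, (a * z) * c - c * (a * z)} : Set A) with hU
    have comm_a_az : (a * z) * a = a * (a * z) := by rw [mul_assoc, ← hza]
    have main2 : ∀ gg ∈ ({c, a * z, a} : Set A), ∀ v ∈ Submodule.span k ({c, a * z, a} : Set A),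
        v * gg - gg * v ∈ U := by
      intro gg hgg v hv
      have hle2 : Submodule.span k ({c, a * z, a} : Set A) ≤
          U.comap (LinearMap.mulRight k gg - LinearMap.mulLeft k gg) := by
        rw [Submodule.span_le]
        intro w hw
        simp only [SetLike.mem_coe, Submodule.mem_comap, LinearMap.sub_apply,
          LinearMap.mulRight_apply, LinearMap.mulLeft_apply]
        simp only [Set.mem_insert_iff, Set.mem_singleton_iff] at hw hgg
        have hu1 : a * c - c * a ∈ U := Submodule.subset_span (Or.inl rfl)
        have hu2 : (a * z) * c - c * (a * z) ∈ U := Submodule.subset_span (Or.inr rfl)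
        rcases hw with rfl | rfl | rfl <;> rcases hgg with rfl | rfl | rfl
        · rw [sub_self]; exact U.zero_mem
        · rw [← neg_sub]; exact U.neg_mem hu2
        · rw [← neg_sub]; exact U.neg_mem hu1
        · exact hu2
        · rw [sub_self]; exact U.zero_mem
        · rw [comm_a_az, sub_self]; exact U.zero_mem
        · exact hu1
        · rw [← comm_a_az, sub_self]; exact U.zero_mem
        · rw [sub_self]; exact U.zero_mem
      exact hle2 hv
    rw [hK, Submodule.span_le]
    rintro v ⟨p, q, rfl⟩
    simp only [SetLike.mem_coe]
    have hq' : q ∈ Zs ⊔ Submodule.span k ({c, a * z, a} : Set A) := by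
      rw [hsupc]; exact Submodule.mem_top
    obtain ⟨q0, hq0, q1, hq1, rfl⟩ := Submodule.mem_sup.mp hq'
    have hq0c : ∀ b : A, b * q0 = q0 * b :=
      Subalgebra.mem_center_iff.mp (by rwa [hZsdef, Subalgebra.mem_toSubmodule] at hq0)
    have hp' : p ∈ Zs ⊔ Submodule.span k ({c, a * z, a} : Set A) := by
      rw [hsupc]; exact Submodule.mem_top
    obtain ⟨p0, hp0, p1, hp1, rfl⟩ := Submodule.mem_sup.mp hp'
    have hp0c : ∀ b : A, b * p0 = p0 * b :=
      Subalgebra.mem_center_iff.mp (by rwa [hZsdef, Subalgebra.mem_toSubmodule] at hp0)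
    have split1 : (p0 + p1) * (q0 + q1) - (q0 + q1) * (p0 + p1) = p1 * q1 - q1 * p1 := by
      have e1 : p1 * q0 = q0 * p1 := hq0c p1
      have e2 : p0 * q1 = q1 * p0 := (hp0c q1).symm
      have e3 : p0 * q0 = q0 * p0 := hq0c p0
      calc (p0 + p1) * (q0 + q1) - (q0 + q1) * (p0 + p1)
          = (p0 * q0 - q0 * p0) + (p0 * q1 - q1 * p0) + (p1 * q0 - q0 * p1)
            + (p1 * q1 - q1 * p1) := by noncomm_ring
        _ = p1 * q1 - q1 * p1 := by rw [e3, e2, e1]; abel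
    rw [split1]
    have hle3 : Submodule.span k ({c, a * z, a} : Set A) ≤
        U.comap (LinearMap.mulLeft k p1 - LinearMap.mulRight k p1) := by
      rw [Submodule.span_le]
      intro gg hgg
      simp only [SetLike.mem_coe, Submodule.mem_comap, LinearMap.sub_apply,
        LinearMap.mulRight_apply, LinearMap.mulLeft_apply]
      exact main2 gg hgg p1 hp1
    exact hle3 hq1
  have hsing : ∀ v : A, finrank k ↥(Submodule.span k ({v} : Set A)) ≤ 1 := by
    intro v
    by_cases hv : v = 0
    · subst hv
      rw [Submodule.span_zero_singleton]
      simp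
    · rw [finrank_span_singleton hv]
  have hUbound : ∀ u1 u2 : A, finrank k ↥(Submodule.span k ({u1, u2} : Set A)) ≤ 2 := by
    intro u1 u2
    rw [Submodule.span_insert]
    have h5 := Submodule.finrank_sup_add_finrank_inf_eq (Submodule.span k ({u1} : Set A))
      (Submodule.span k ({u2} : Set A))
    have h6 := hsing u1
    have h7 := hsing u2
    omega
  by_cases htop : Submodule.span k ({Zs.mkQ (a * z), Zs.mkQ a} : Set (A ⧸ Zs)) = ⊤
  · -- c = 0 case
    have hsup0 : Zs ⊔ Submodule.span k ({(0 : A), a * z, a} : Set A) = ⊤ := by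
      rw [← Submodule.map_mkQ_eq_top, Submodule.map_span]
      rw [show (Zs.mkQ '' {(0 : A), a * z, a}) = {(0 : A ⧸ Zs), Zs.mkQ (a * z), Zs.mkQ a} by
        simp [Set.image_insert_eq]]
      rw [Submodule.span_insert_zero]
      exact htop
    have hK0 := claim 0 hsup0
    have : K ≤ ⊥ := by
      refine le_trans hK0 ?_
      rw [show a * (0 : A) - 0 * a = 0 by simp, show (a * z) * (0 : A) - 0 * (a * z) = 0 by simp]
      simp [Submodule.span_insert_zero, Submodule.span_zero_singleton]
    have hKbot : finrank k ↥K = 0 := by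
      rw [le_bot_iff] at this
      rw [this]
      simp
    omega
  · obtain ⟨cb, hcb⟩ : ∃ cb, cb ∉ Submodule.span k ({Zs.mkQ (a * z), Zs.mkQ a} : Set (A ⧸ Zs)) := by
      by_contra hcc
      push_neg at hcc
      exact htop (top_unique fun x _ => hcc x)
    obtain ⟨c, rfl⟩ := Zs.mkQ_surjective cb
    have htriple : LinearIndependent k
        (Fin.cons (Zs.mkQ c) ![Zs.mkQ (a * z), Zs.mkQ a] : Fin 3 → A ⧸ Zs) := by
      rw [linearIndependent_fin_cons]
      refine ⟨hpair, ?_⟩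
      have hrange : Set.range ![Zs.mkQ (a * z), Zs.mkQ a] =
          ({Zs.mkQ (a * z), Zs.mkQ a} : Set (A ⧸ Zs)) := by
        ext w
        simp only [Matrix.range_cons, Matrix.range_empty, Set.union_empty, Set.mem_insert_iff,
          Set.mem_singleton_iff, Set.mem_range, Set.mem_union]
      rw [hrange]
      exact hcb
    have h3r : 3 ≤ finrank k (A ⧸ Zs) := by
      simpa using htriple.fintype_card_le_finrank
    have hspan : Submodule.span k
        (Set.range (Fin.cons (Zs.mkQ c) ![Zs.mkQ (a * z), Zs.mkQ a] : Fin 3 → A ⧸ Zs)) = ⊤ := by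
      apply Submodule.eq_top_of_finrank_eq
      rw [finrank_span_eq_card htriple]
      simp
      omega
    have hsupc : Zs ⊔ Submodule.span k ({c, a * z, a} : Set A) = ⊤ := by
      rw [← Submodule.map_mkQ_eq_top, Submodule.map_span]
      rw [show (Zs.mkQ '' {c, a * z, a}) =
        Set.range (Fin.cons (Zs.mkQ c) ![Zs.mkQ (a * z), Zs.mkQ a] : Fin 3 → A ⧸ Zs) by
        ext w
        simp [Set.image_insert_eq, Matrix.range_cons, Matrix.range_empty]
        tauto]
      exact hspan
    have hKle := claim c hsupc
    have hfin : finrank k ↥K ≤ 2 :=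
      le_trans (Submodule.finrank_mono hKle) (hUbound _ _)
    omega


/-- Z₁ = Z(A) ∩ J(A) is a two-sided ideal of A. -/
theorem stmt14 (k : Type) [Field k] [CharP k 3] [IsAlgClosed k]
    (A : Type) [Ring A] [Algebra k A] [FiniteDimensional k A]
    [IsLocalRing A] (hsym : IsSymmAlg k A) (hdim : finrank k A = 9)
    (hcen : Nonempty (Subalgebra.center k A ≃ₐ[k] Subalgebra.center k (Balg k))) :
    ∀ a : A, ∀ z ∈ Subalgebra.center k A, ¬ IsUnit z →
      (a * z ∈ Subalgebra.center k A ∧ ¬ IsUnit (a * z) ∧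
       z * a ∈ Subalgebra.center k A ∧ ¬ IsUnit (z * a)) := by
  intro a z hz hzu
  have hZ : ∃ g : Fin 6 → ↥(Subalgebra.center k A), LinearIndependent k g := by
    obtain ⟨e⟩ := hcen
    obtain ⟨g, hg⟩ := exists_indep_center k
    refine ⟨fun i => e.symm (g i), LinearIndependent.of_comp e.toAlgHom.toLinearMap ?_⟩
    convert hg using 1
    · funext i
      simp
    · exact Module.ext' _ _ fun r x => rfl
  have h1 : a * z ∈ Subalgebra.center k A := central_mul_central k A hsym hdim hZ z hz hzu a
  have hza : z * a = a * z := (Subalgebra.mem_center_iff.mp hz a).symm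
  have hnu : ¬ IsUnit (a * z) := by
    intro hu
    apply hzu
    obtain ⟨u, hu'⟩ := hu
    have e1 : ((↑u⁻¹ : A) * a) * z = 1 := by
      rw [mul_assoc, ← hu', u.inv_mul]
    have e2 : z * ((↑u⁻¹ : A) * a) = 1 := by
      rw [← mul_assoc, ← (Subalgebra.mem_center_iff.mp hz (↑u⁻¹ : A)), mul_assoc, hza,
        ← hu', u.inv_mul]
    exact ⟨⟨z, (↑u⁻¹ : A) * a, e2, e1⟩, rfl⟩
  refine ⟨h1, hnu, ?_, ?_⟩
  · rwa [hza]
  · rwa [hza]
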